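/- Let ε₁ = e₁, ε₂ = e₂, ε₃ = −e₁ − e₂ and γ = e₃, where e₁, e₂, e₃ is the standard basis of ℝ³, and let Δ ⊂ ℝ³ be the root system of G(3), namely Δ := {ε_i − ε_j : 1 ≤ i ≠ j ≤ 3} ∪ {±ε_i : 1 ≤ i ≤ 3} ∪ {±γ} ∪ {±γ/2} ∪ {±ε_i ± γ/2 : 1 ≤ i ≤ 3}. Then there exists no cominuscule parabolic set of roots of Δ. -/
import Mathlib


open Pointwise

/-- A proper subset `P` of a symmetric root set `Δ` is a parabolic set of roots if
`Δ = P ∪ (-P)` and `P` is closed under sums lying in `Δ`. -/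
def IsParabolic {V : Type*} [AddCommGroup V] (Δ P : Set V) : Prop :=
  P ⊂ Δ ∧ Δ = P ∪ (-P) ∧ ∀ α ∈ P, ∀ β ∈ P, α + β ∈ Δ → α + β ∈ P

/-- A parabolic set of roots is cominuscule if the sum of any two elements of its
nilradical `N⁺ = P \ (-P)` is not a root. -/
def IsCominuscule {V : Type*} [AddCommGroup V] (Δ P : Set V) : Prop :=
  IsParabolic Δ P ∧ ∀ α ∈ P \ (-P), ∀ β ∈ P \ (-P), α + β ∉ Δ

namespace G3

/-- `ε₁ = e₁`, `ε₂ = e₂`, `ε₃ = -e₁ - e₂` in `ℝ³`. -/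
noncomputable def ε (i : Fin 3) : Fin 3 → ℝ :=
  if i = 0 then Pi.single 0 1
  else if i = 1 then Pi.single 1 1
  else -Pi.single 0 1 - Pi.single 1 1

/-- `γ = e₃`, the third standard basis vector of `ℝ³`. -/
noncomputable def γ : Fin 3 → ℝ := Pi.single 2 1

/-- The root system of `G(3)`. -/
noncomputable def Δroot : Set (Fin 3 → ℝ) :=
  {v | ∃ i j : Fin 3, i ≠ j ∧ v = ε i - ε j} ∪
  {v | ∃ i : Fin 3, v = ε i ∨ v = -ε i} ∪
  {v | v = γ ∨ v = -γ} ∪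
  {v | v = (2⁻¹ : ℝ) • γ ∨ v = -((2⁻¹ : ℝ) • γ)} ∪
  {v | ∃ i : Fin 3, v = ε i + (2⁻¹ : ℝ) • γ ∨ v = ε i - (2⁻¹ : ℝ) • γ ∨
      v = -ε i + (2⁻¹ : ℝ) • γ ∨ v = -ε i - (2⁻¹ : ℝ) • γ}

lemma memA {i j : Fin 3} (h : i ≠ j) : ε i - ε j ∈ Δroot :=
  Or.inl (Or.inl (Or.inl (Or.inl ⟨i, j, h, rfl⟩)))

lemma memB (i : Fin 3) : ε i ∈ Δroot :=
  Or.inl (Or.inl (Or.inl (Or.inr ⟨i, Or.inl rfl⟩)))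

lemma memB' (i : Fin 3) : -ε i ∈ Δroot :=
  Or.inl (Or.inl (Or.inl (Or.inr ⟨i, Or.inr rfl⟩)))

lemma memC : γ ∈ Δroot := Or.inl (Or.inl (Or.inr (Or.inl rfl)))

lemma memC' : -γ ∈ Δroot := Or.inl (Or.inl (Or.inr (Or.inr rfl)))

lemma eps_sum : ε 0 + ε 1 + ε 2 = 0 := by
  ext x; fin_cases x <;> simp [ε, Pi.single]

lemma half_half : (2⁻¹ : ℝ) • γ + (2⁻¹ : ℝ) • γ = γ := by
  rw [← add_smul]; norm_num

end G3

theorem stmt_11 : ¬ ∃ P : Set (Fin 3 → ℝ), IsCominuscule G3.Δroot P := by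
  rintro ⟨P, ⟨⟨hsub, hcover, hclosed⟩, hcom⟩⟩
  set Δ := G3.Δroot with hΔdef
  set c : Fin 3 → ℝ := (2⁻¹ : ℝ) • G3.γ with hc
  -- basic facts
  have mem_or : ∀ v ∈ Δ, v ∈ P ∨ -v ∈ P := by
    intro v hv
    rw [hcover] at hv
    rcases hv with h | h
    · exact Or.inl h
    · exact Or.inr (Set.mem_neg.mp h)
  have symm : ∀ v ∈ Δ, -v ∈ Δ := by
    intro v hv
    rw [hcover] at hv ⊢
    rcases hv with h | h
    · exact Or.inr (Set.neg_mem_neg.mpr h)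
    · exact Or.inl (Set.mem_neg.mp h)
  have PsubΔ : P ⊆ Δ := hsub.subset
  -- hcom in convenient form
  have com : ∀ α, α ∈ P → -α ∉ P → ∀ β, β ∈ P → -β ∉ P → α + β ∉ Δ := by
    intro α hα hα' β hβ hβ' h
    exact hcom α ⟨hα, fun hm => hα' (Set.mem_neg.mp hm)⟩
      β ⟨hβ, fun hm => hβ' (Set.mem_neg.mp hm)⟩ h
  -- γ/2 and -γ/2 are in P
  have hg2 : c ∈ P ∧ -c ∈ P := by
    have hcΔ : c ∈ Δ := Or.inl (Or.inr (Or.inl rfl))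
    rcases mem_or c hcΔ with h | h
    · refine ⟨h, ?_⟩
      by_contra h'
      exact com c h h' c h h' (by rw [G3.half_half]; exact G3.memC)
    · refine ⟨?_, h⟩
      by_contra h'
      have h'' : -(-c) ∉ P := by simpa using h'
      exact com (-c) h h'' (-c) h h''
        (by rw [show -c + -c = -G3.γ by rw [← neg_add, G3.half_half]]; exact G3.memC')
  -- γ and -γ are in P
  have hγP : G3.γ ∈ P := by
    have := hclosed c hg2.1 c hg2.1 (by rw [G3.half_half]; exact G3.memC)
    rwa [G3.half_half] at this
  have hγP' : -G3.γ ∈ P := by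
    have e : -c + -c = -G3.γ := by rw [← neg_add, G3.half_half]
    have := hclosed (-c) hg2.2 (-c) hg2.2 (by rw [e]; exact G3.memC')
    rwa [e] at this
  -- N⁺ + L ⊆ N⁺
  have NL : ∀ δ, δ ∈ P → -δ ∉ P → ∀ l, l ∈ P → -l ∈ P → δ + l ∈ Δ →
      δ + l ∈ P ∧ -(δ + l) ∉ P := by
    intro δ hδ hδ' l hl hl' hΔs
    refine ⟨hclosed δ hδ l hl hΔs, ?_⟩
    intro hneg
    have e : -(δ + l) + l = -δ := by abel
    have hmδΔ : -δ ∈ Δ := symm δ (PsubΔ hδ)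
    have := hclosed _ hneg l hl (by rw [e]; exact hmδΔ)
    rw [e] at this
    exact hδ' this
  -- core contradiction lemma
  have core : ∀ η β : Fin 3 → ℝ, η ∈ P → -η ∉ P → β ∈ Δ → η + β ∈ Δ →
      η - β ∈ Δ → η + (η + β) ∈ Δ → False := by
    intro η β hη hη' hβ h1 h2 h3
    by_cases hb : β ∈ P
    · by_cases hb' : -β ∈ P
      · obtain ⟨hs, hs'⟩ := NL η hη hη' β hb hb' h1
        exact com η hη hη' (η + β) hs hs' h3
      · exact com η hη hη' β hb hb' h1
    · have hb' : -β ∈ P := (mem_or β hβ).resolve_left hb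
      have hb'' : -(-β) ∉ P := by simpa using hb
      exact com η hη hη' (-β) hb' hb'' (by rwa [← sub_eq_add_neg])
  -- wrapper for one triple
  have wrap1 : ∀ m j k : Fin 3, m ≠ j → m ≠ k → j ≠ m → k ≠ m →
      G3.ε m + G3.ε j + G3.ε k = 0 →
      ∀ η, (η = G3.ε m ∨ η = -G3.ε m) → η ∈ P → -η ∉ P → False := by
    rintro m j k hmj hmk hjm hkm hA η (rfl | rfl) hη hη'
    · have e1 : G3.ε m + G3.ε j = -G3.ε k := by linear_combination hA
      refine core (G3.ε m) (G3.ε j) hη hη' (G3.memB j) ?_ (G3.memA hmj) ?_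
      · rw [e1]; exact G3.memB' k
      · rw [e1, show G3.ε m + -G3.ε k = G3.ε m - G3.ε k from (sub_eq_add_neg _ _).symm]
        exact G3.memA hmk
    · have e1 : -G3.ε m + -G3.ε j = G3.ε k := by linear_combination -hA
      refine core (-G3.ε m) (-G3.ε j) hη hη' (G3.memB' j) ?_ ?_ ?_
      · rw [e1]; exact G3.memB k
      · rw [show -G3.ε m - -G3.ε j = G3.ε j - G3.ε m by abel]
        exact G3.memA hjm
      · rw [e1, show -G3.ε m + G3.ε k = G3.ε k - G3.ε m by abel]
        exact G3.memA hkm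
  -- wrapper over all indices
  have wrap : ∀ m : Fin 3, ∀ η, (η = G3.ε m ∨ η = -G3.ε m) → η ∈ P → -η ∉ P → False := by
    intro m
    fin_cases m
    · exact wrap1 0 1 2 (by decide) (by decide) (by decide) (by decide) G3.eps_sum
    · exact wrap1 1 2 0 (by decide) (by decide) (by decide) (by decide)
        (by linear_combination G3.eps_sum)
    · exact wrap1 2 0 1 (by decide) (by decide) (by decide) (by decide)
        (by linear_combination G3.eps_sum)
  -- there is an element of N⁺
  obtain ⟨x, hxΔ, hxP⟩ := Set.exists_of_ssubset hsub
  have hδ : -x ∈ P := (mem_or x hxΔ).resolve_left hxP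
  have hδ' : -(-x) ∉ P := by simpa using hxP
  -- classify δ₀ = -x and derive a contradiction in each case
  have hδΔ : -x ∈ Δ := PsubΔ hδ
  rcases hδΔ with ((((⟨i, j, hij, he⟩ | ⟨i, he | he⟩) | he | he) | he | he) | ⟨i, he | he | he | he⟩)
  all_goals rw [he] at hδ hδ'
  -- case ε i - ε j
  · by_cases hj : G3.ε j ∈ P
    · by_cases hj' : -G3.ε j ∈ P
      · have e : G3.ε i - G3.ε j + G3.ε j = G3.ε i := by abel
        obtain ⟨hs, hs'⟩ := NL _ hδ hδ' (G3.ε j) hj hj' (by rw [e]; exact G3.memB i)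
        rw [e] at hs hs'
        exact wrap i (G3.ε i) (Or.inl rfl) hs hs'
      · exact wrap j (G3.ε j) (Or.inl rfl) hj hj'
    · have hj' : -G3.ε j ∈ P := (mem_or (G3.ε j) (G3.memB j)).resolve_left hj
      exact wrap j (-G3.ε j) (Or.inr rfl) hj' (by simpa using hj)
  -- case ± ε i
  · exact wrap i (G3.ε i) (Or.inl rfl) hδ hδ'
  · exact wrap i (-G3.ε i) (Or.inr rfl) hδ hδ'
  -- case ± γ
  · exact hδ' hγP'
  · exact hδ' (by simpa using hγP)
  -- case ± γ/2
  · exact hδ' hg2.2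
  · exact hδ' (by simpa using hg2.1)
  -- case ε i + γ/2
  · have e : G3.ε i + c + -c = G3.ε i := by abel
    obtain ⟨hs, hs'⟩ := NL _ hδ hδ' (-c) hg2.2 (by simpa using hg2.1)
      (by rw [e]; exact G3.memB i)
    rw [e] at hs hs'
    exact wrap i (G3.ε i) (Or.inl rfl) hs hs'
  -- case ε i - γ/2
  · have e : G3.ε i - c + c = G3.ε i := by abel
    obtain ⟨hs, hs'⟩ := NL _ hδ hδ' c hg2.1 hg2.2 (by rw [e]; exact G3.memB i)
    rw [e] at hs hs'
    exact wrap i (G3.ε i) (Or.inl rfl) hs hs'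
  -- case -ε i + γ/2
  · have e : -G3.ε i + c + -c = -G3.ε i := by abel
    obtain ⟨hs, hs'⟩ := NL _ hδ hδ' (-c) hg2.2 (by simpa using hg2.1)
      (by rw [e]; exact G3.memB' i)
    rw [e] at hs hs'
    exact wrap i (-G3.ε i) (Or.inr rfl) hs hs'
  -- case -ε i - γ/2
  · have e : -G3.ε i - c + c = -G3.ε i := by abel
    obtain ⟨hs, hs'⟩ := NL _ hδ hδ' c hg2.1 hg2.2 (by rw [e]; exact G3.memB' i)
    rw [e] at hs hs'
    exact wrap i (-G3.ε i) (Or.inr rfl) hs hs'
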